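/- Let B̄ be a standardized max-linear coefficient matrix on a DAG D (b̄_{ji} > 0 iff j ∈ An(i), each column sums to 1) satisfying b̄_{ji} ≥ b̄_{jk}b̄_{ki}/b̄_{kk} for k ∈ an(i), j ∈ an(k), with χ the associated tail dependence matrix. Then for i ∈ V, j ∈ an(i), and k ∈ de(j) ∩ an(i): if every ℓ ∈ An(j) admits a max-weighted path to k through j, every ℓ ∈ An(j) admits a max-weighted path to i through j, and every ℓ ∈ An(k) admits a max-weighted path to i through k, then χ(j,i) = χ(j,k)·χ(k,i) < min(χ(j,k), χ(k,i)). -/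

import Mathlib

open Finset
open scoped Classical

/-- `anc E j i`: there is a directed path (length ≥ 1) from `j` to `i`, i.e. `j` is a
strict ancestor of `i` in the directed graph with edge relation `E`. -/
def anc {d : ℕ} (E : Fin d → Fin d → Prop) (j i : Fin d) : Prop :=
  Relation.TransGen E j i

/-- `Anc E j i`: `j` is an ancestor of `i`, including `j = i`. -/
def Anc {d : ℕ} (E : Fin d → Fin d → Prop) (j i : Fin d) : Prop :=
  j = i ∨ Relation.TransGen E j i

/-- The tail dependence coefficient associated to a (standardized) max-linear
coefficient matrix `B`: `χ(i,j) = ∑_{k ∈ An(i) ∩ An(j)} min (B k i) (B k j)`. -/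
noncomputable def tdc {d : ℕ} (E : Fin d → Fin d → Prop)
    (B : Matrix (Fin d) (Fin d) ℝ) (i j : Fin d) : ℝ :=
  ∑ k ∈ Finset.univ.filter (fun k => Anc E k i ∧ Anc E k j), min (B k i) (B k j)

lemma tdc_key {d : ℕ} (E : Fin d → Fin d → Prop)
    (hacyc : ∀ i, ¬ anc E i i)
    (B : Matrix (Fin d) (Fin d) ℝ)
    (hnn : ∀ j i, 0 ≤ B j i)
    (hsgn : ∀ j i, 0 < B j i ↔ Anc E j i)
    (hcol : ∀ i, ∑ k ∈ Finset.univ.filter (fun k => Anc E k i), B k i = 1)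
    (j i : Fin d) (hji : anc E j i)
    (h2 : ∀ ℓ, Anc E ℓ j → B ℓ i = B ℓ j * B j i / B j j) :
    tdc E B j i = B j i / B j j ∧ B j i / B j j < 1 := by
  have hjj : 0 < B j j := (hsgn j j).2 (Or.inl rfl)
  have hAnc : ∀ ℓ : Fin d, Anc E ℓ j → Anc E ℓ i := by
    rintro ℓ (rfl | h)
    · exact Or.inr hji
    · exact Or.inr (h.trans hji)
  have hsub : (Finset.univ.filter (fun ℓ => Anc E ℓ j)) ⊆
      (Finset.univ.filter (fun ℓ => Anc E ℓ i)) := by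
    intro ℓ hℓ
    simp only [Finset.mem_filter, Finset.mem_univ, true_and] at *
    exact hAnc ℓ hℓ
  have hiNot : i ∉ Finset.univ.filter (fun ℓ => Anc E ℓ j) := by
    simp only [Finset.mem_filter, Finset.mem_univ, true_and]
    rintro (rfl | h)
    · exact hacyc i hji
    · exact hacyc i (h.trans hji)
  have hSi : ∑ ℓ ∈ Finset.univ.filter (fun ℓ => Anc E ℓ j), B ℓ i
      = B j i / B j j := by
    have : ∀ ℓ ∈ Finset.univ.filter (fun ℓ => Anc E ℓ j),
        B ℓ i = B ℓ j * (B j i / B j j) := by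
      intro ℓ hℓ
      simp only [Finset.mem_filter, Finset.mem_univ, true_and] at hℓ
      rw [h2 ℓ hℓ, mul_div_assoc]
    rw [Finset.sum_congr rfl this, ← Finset.sum_mul, hcol j, one_mul]
  have hlt : B j i / B j j < 1 := by
    rw [← hSi, ← hcol i]
    refine Finset.sum_lt_sum_of_subset hsub (by simp only [Finset.mem_filter, Finset.mem_univ, true_and]; exact Or.inl rfl) hiNot
      ((hsgn i i).2 (Or.inl rfl)) (fun ℓ _ _ => hnn ℓ i)
  refine ⟨?_, hlt⟩
  unfold tdc
  have hfilt : (Finset.univ.filter (fun ℓ => Anc E ℓ j ∧ Anc E ℓ i))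
      = Finset.univ.filter (fun ℓ => Anc E ℓ j) := by
    apply Finset.filter_congr
    intro ℓ _
    exact ⟨fun h => h.1, fun h => ⟨h, hAnc ℓ h⟩⟩
  rw [hfilt, ← hSi]
  apply Finset.sum_congr rfl
  intro ℓ hℓ
  simp only [Finset.mem_filter, Finset.mem_univ, true_and] at hℓ
  apply min_eq_right
  rw [h2 ℓ hℓ, mul_div_assoc]
  calc B ℓ j * (B j i / B j j) ≤ B ℓ j * 1 :=
        mul_le_mul_of_nonneg_left hlt.le (hnn ℓ j)
    _ = B ℓ j := mul_one _

theorem stmt19 {d : ℕ} (E : Fin d → Fin d → Prop)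
    (hacyc : ∀ i, ¬ anc E i i)
    (B : Matrix (Fin d) (Fin d) ℝ)
    (hnn : ∀ j i, 0 ≤ B j i)
    (hsgn : ∀ j i, 0 < B j i ↔ Anc E j i)
    (hcol : ∀ i, ∑ k ∈ Finset.univ.filter (fun k => Anc E k i), B k i = 1)
    (hineq : ∀ i k j, anc E k i → anc E j k → B j k * B k i / B k k ≤ B j i)
    (i j k : Fin d) (hji : anc E j i) (hjk : anc E j k) (hki : anc E k i)
    (h1 : ∀ ℓ, Anc E ℓ j → B ℓ k = B ℓ j * B j k / B j j)
    (h2 : ∀ ℓ, Anc E ℓ j → B ℓ i = B ℓ j * B j i / B j j)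
    (h3 : ∀ ℓ, Anc E ℓ k → B ℓ i = B ℓ k * B k i / B k k) :
    tdc E B j i = tdc E B j k * tdc E B k i ∧
    tdc E B j i < min (tdc E B j k) (tdc E B k i) := by
  obtain ⟨eji, lji⟩ := tdc_key E hacyc B hnn hsgn hcol j i hji h2
  obtain ⟨ejk, ljk⟩ := tdc_key E hacyc B hnn hsgn hcol j k hjk h1
  obtain ⟨eki, lki⟩ := tdc_key E hacyc B hnn hsgn hcol k i hki h3
  have hjj : (0:ℝ) < B j j := (hsgn j j).2 (Or.inl rfl)
  have hkk : (0:ℝ) < B k k := (hsgn k k).2 (Or.inl rfl)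
  have hBji : B j i = B j k * B k i / B k k := h3 j (Or.inr hjk)
  have hprod : tdc E B j i = tdc E B j k * tdc E B k i := by
    rw [eji, ejk, eki, hBji]
    rw [div_mul_div_comm, div_div, mul_comm (B j j)]
  refine ⟨hprod, lt_min ?_ ?_⟩
  · rw [hprod]
    have hpos : 0 < tdc E B j k := by
      rw [ejk]; exact div_pos ((hsgn j k).2 (Or.inr hjk)) hjj
    calc tdc E B j k * tdc E B k i < tdc E B j k * 1 := by
          rw [eki] at *; exact mul_lt_mul_of_pos_left lki hpos
      _ = tdc E B j k := mul_one _
  · rw [hprod]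
    have hpos : 0 < tdc E B k i := by
      rw [eki]; exact div_pos ((hsgn k i).2 (Or.inr hki)) hkk
    calc tdc E B j k * tdc E B k i < 1 * tdc E B k i := by
          rw [ejk] at *; exact mul_lt_mul_of_pos_right ljk hpos
      _ = tdc E B k i := one_mul _
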